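/- For all integers g ≥ 1 and natural numbers m, n: the ℂ-dimension of V₊^{(g,m,n)} equals ⌊(m − |3n−6g+6|)/2⌋ + 1 if m ≥ |3n−6g+6| and equals 0 otherwise; the ℂ-dimension of V₋^{(g,m,n)} equals ⌊(m − 1 − |3n−6g+6|)/2⌋ + 1 if m − 1 ≥ |3n−6g+6| and equals 0 otherwise. -/

import Mathlib

open MvPolynomial

set_option synthInstance.maxHeartbeats 1000000
set_option maxHeartbeats 1000000

noncomputable section

/-- `K = ℂ(z₁,z₂)`, the field of rational functions in two variables over `ℂ`. -/
abbrev K2 : Type := FractionRing (MvPolynomial (Fin 2) ℂ)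

/-- The rational function `z₁`. -/
def z1 : K2 := algebraMap (MvPolynomial (Fin 2) ℂ) K2 (X 0)

/-- The rational function `z₂`. -/
def z2 : K2 := algebraMap (MvPolynomial (Fin 2) ℂ) K2 (X 1)

/-- The conifold discriminant `Δ₁ = (1−432z₁)³ − 27·(432z₁)³·z₂`. -/
def Δ1 : K2 := (1 - 432 * z1) ^ 3 - 27 * (432 * z1) ^ 3 * z2

/-- The conifold discriminant `Δ₂ = 1 + 27z₂`. -/
def Δ2 : K2 := 1 + 27 * z2

/-- `V₊^{(g,m,n)}`: the ℂ-span of `z₁^{k₁}(1/432−z₁)^{k₂} z₂^n (Δ₁Δ₂)^{−(2g−2)}`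
over all `k₁, k₂ ≥ 0` with `k₁+k₂ ≤ m` and `k₁−k₂ = 3n−6g+6`. -/
def Vplus (g : ℤ) (m n : ℕ) : Submodule ℂ K2 :=
  Submodule.span ℂ
    {f : K2 | ∃ k₁ k₂ : ℕ, k₁ + k₂ ≤ m ∧ (k₁ : ℤ) - k₂ = 3 * n - 6 * g + 6 ∧
      f = z1 ^ k₁ * (1 / 432 - z1) ^ k₂ * z2 ^ n * (Δ1 * Δ2) ^ (-(2 * g - 2))}

/-- `V₋^{(g,m,n)}`: the ℂ-span of `(1/432−2z₁)·z₁^{k₁}(1/432−z₁)^{k₂} z₂^n (Δ₁Δ₂)^{−(2g−2)}`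
over all `k₁, k₂ ≥ 0` with `k₁+k₂ ≤ m−1` and `k₁−k₂ = 3n−6g+6`. -/
def Vminus (g : ℤ) (m n : ℕ) : Submodule ℂ K2 :=
  Submodule.span ℂ
    {f : K2 | ∃ k₁ k₂ : ℕ, k₁ + k₂ + 1 ≤ m ∧ (k₁ : ℤ) - k₂ = 3 * n - 6 * g + 6 ∧
      f = (1 / 432 - 2 * z1) * z1 ^ k₁ * (1 / 432 - z1) ^ k₂ * z2 ^ n *
            (Δ1 * Δ2) ^ (-(2 * g - 2))}

/-! ### Auxiliary lemmas -/

lemma mvInj : Function.Injective (algebraMap (MvPolynomial (Fin 2) ℂ) K2) :=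
  IsFractionRing.injective _ _

lemma z1_trans : Transcendental ℂ z1 := by
  rw [z1, transcendental_algebraMap_iff mvInj]
  exact MvPolynomial.transcendental_X ℂ 0

lemma z2_trans : Transcendental ℂ z2 := by
  rw [z2, transcendental_algebraMap_iff mvInj]
  exact MvPolynomial.transcendental_X ℂ 1

lemma algconst (c : ℂ) {x : K2} (hx : Transcendental ℂ x) : x ≠ algebraMap ℂ K2 c := by
  intro h
  exact hx (h ▸ isAlgebraic_algebraMap c)

lemma z1_ne : z1 ≠ 0 := by simpa using algconst 0 z1_trans

lemma z2_ne : z2 ≠ 0 := by simpa using algconst 0 z2_trans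

lemma c1_ne : (1 / 432 : K2) - z1 ≠ 0 := by
  have h2 : ((1 : K2) / 432) = algebraMap ℂ K2 (1 / 432) := by simp [map_ofNat]
  intro h
  apply algconst (1 / 432) z1_trans
  rw [← h2]
  linear_combination -h

lemma e_ne : (1 / 432 : K2) - 2 * z1 ≠ 0 := by
  have h2 : algebraMap ℂ K2 (1 / 864) = ((1 : K2) / 864) := by simp [map_ofNat]
  intro h
  apply algconst (1 / 864) z1_trans
  rw [h2]
  linear_combination -h / 2

lemma Δ1_ne : Δ1 ≠ 0 := by
  have he : Δ1 = algebraMap (MvPolynomial (Fin 2) ℂ) K2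
      ((1 - 432 * X 0) ^ 3 - 27 * (432 * X 0) ^ 3 * X 1) := by
    rw [Δ1, z1, z2]
    simp [map_ofNat]
  rw [he, map_ne_zero_iff _ mvInj]
  intro h
  have h0 := congrArg (MvPolynomial.eval (fun _ => (0 : ℂ))) h
  simp at h0

lemma Δ2_ne : Δ2 ≠ 0 := by
  intro h
  apply algconst (-(1 / 27)) z2_trans
  have h2 : algebraMap ℂ K2 (-(1 / 27)) = -((1 : K2) / 27) := by simp [map_ofNat]
  rw [h2, Δ2] at *
  linear_combination h / 27

lemma q_trans : Transcendental ℂ (z1 * (1 / 432 - z1)) := by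
  set P : Polynomial ℂ := Polynomial.C (1 / 432) * Polynomial.X - Polynomial.X ^ 2 with hP
  have hdeg : P.natDegree = 2 := by rw [hP]; compute_degree!
  have hlc : P.leadingCoeff = -1 := by
    rw [Polynomial.leadingCoeff, hdeg, hP]; simp [Polynomial.coeff_X_pow]
  have h := z1_trans.aeval P (by rw [hdeg]; norm_num)
    (by rw [hlc]; exact mem_nonZeroDivisors_of_ne_zero (by norm_num))
  convert h using 1
  rw [hP]
  simp [Polynomial.aeval_def]
  rw [map_ofNat]
  ring

lemma li_pow {x : K2} (hx : Transcendental ℂ x) :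
    LinearIndependent ℂ fun n : ℕ => x ^ n := by
  have h := transcendental_iff_injective.mp hx
  have hb := (Polynomial.basisMonomials ℂ).linearIndependent
  have h2 := hb.map' (Polynomial.aeval x).toLinearMap (LinearMap.ker_eq_bot.mpr h)
  convert h2 using 1
  funext n
  simp [Polynomial.coe_basisMonomials, Polynomial.aeval_monomial]
  all_goals rfl

/-- The general family of generators. -/
def genSet (d : ℤ) (M : ℕ) (v : K2) : Set K2 :=
  {f : K2 | ∃ k₁ k₂ : ℕ, k₁ + k₂ ≤ M ∧ (k₁ : ℤ) - k₂ = d ∧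
    f = z1 ^ k₁ * (1 / 432 - z1) ^ k₂ * v}

lemma finrank_genSet (d : ℤ) (M : ℕ) (v : K2) (hv : v ≠ 0) :
    Module.finrank ℂ (Submodule.span ℂ (genSet d M v)) =
      if d.natAbs ≤ M then (M - d.natAbs) / 2 + 1 else 0 := by
  by_cases hm : d.natAbs ≤ M
  · rw [if_pos hm]
    set a := d.natAbs with ha
    set N := (M - a) / 2 + 1 with hN
    set w : K2 := (if 0 ≤ d then z1 ^ a else (1 / 432 - z1) ^ a) * v with hw
    have hwne : w ≠ 0 := by
      rw [hw]; split
      · exact mul_ne_zero (pow_ne_zero _ z1_ne) hv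
      · exact mul_ne_zero (pow_ne_zero _ c1_ne) hv
    have hset : genSet d M v =
        Set.range (fun t : Fin N => (z1 * (1 / 432 - z1)) ^ (t : ℕ) * w) := by
      ext x
      simp only [genSet, Set.mem_setOf_eq, Set.mem_range]
      constructor
      · rintro ⟨k₁, k₂, h1, h2, rfl⟩
        by_cases hd : 0 ≤ d
        · have hk : k₁ = k₂ + a := by omega
          subst hk
          refine ⟨⟨k₂, by omega⟩, ?_⟩
          show (z1 * (1 / 432 - z1)) ^ k₂ * w = z1 ^ (k₂ + a) * (1 / 432 - z1) ^ k₂ * v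
          rw [hw, if_pos hd, mul_pow]
          ring
        · have hk : k₂ = k₁ + a := by omega
          subst hk
          refine ⟨⟨k₁, by omega⟩, ?_⟩
          show (z1 * (1 / 432 - z1)) ^ k₁ * w = z1 ^ k₁ * (1 / 432 - z1) ^ (k₁ + a) * v
          rw [hw, if_neg hd, mul_pow]
          ring
      · rintro ⟨⟨t, ht⟩, rfl⟩
        by_cases hd : 0 ≤ d
        · refine ⟨t + a, t, by omega, by omega, ?_⟩
          show (z1 * (1 / 432 - z1)) ^ t * w = z1 ^ (t + a) * (1 / 432 - z1) ^ t * v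
          rw [hw, if_pos hd, mul_pow]
          ring
        · refine ⟨t, t + a, by omega, by omega, ?_⟩
          show (z1 * (1 / 432 - z1)) ^ t * w = z1 ^ t * (1 / 432 - z1) ^ (t + a) * v
          rw [hw, if_neg hd, mul_pow]
          ring
    have hli : LinearIndependent ℂ
        (fun t : Fin N => (z1 * (1 / 432 - z1)) ^ (t : ℕ) * w) := by
      have h1 := li_pow q_trans
      have h2 := h1.map' (LinearMap.mulRight ℂ w)
        (LinearMap.ker_eq_bot.mpr fun x y hxy => mul_right_cancel₀ hwne hxy)
      exact h2.comp (fun t : Fin N => (t : ℕ)) Fin.val_injective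
    rw [hset, finrank_span_eq_card hli, Fintype.card_fin]
  · rw [if_neg hm]
    have hset : genSet d M v = (∅ : Set K2) := by
      ext x
      simp only [genSet, Set.mem_setOf_eq, Set.mem_empty_iff_false, iff_false]
      rintro ⟨k₁, k₂, h1, h2, -⟩
      omega
    rw [hset, Submodule.span_empty]
    exact finrank_bot ℂ K2

/-- Dimension formulas: `dim V₊^{(g,m,n)} = ⌊(m − |3n−6g+6|)/2⌋ + 1` if `m ≥ |3n−6g+6|`
(and `0` otherwise), and `dim V₋^{(g,m,n)} = ⌊(m − 1 − |3n−6g+6|)/2⌋ + 1` if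
`m − 1 ≥ |3n−6g+6|` (and `0` otherwise). -/
theorem dim_Vplus_Vminus (g : ℤ) (hg : 1 ≤ g) (m n : ℕ) :
    (Module.finrank ℂ (Vplus g m n) =
      if (3 * (n : ℤ) - 6 * g + 6).natAbs ≤ m then
        (m - (3 * (n : ℤ) - 6 * g + 6).natAbs) / 2 + 1
      else 0) ∧
    (Module.finrank ℂ (Vminus g m n) =
      if (3 * (n : ℤ) - 6 * g + 6).natAbs + 1 ≤ m then
        (m - 1 - (3 * (n : ℤ) - 6 * g + 6).natAbs) / 2 + 1
      else 0) := by
  have hWne : (Δ1 * Δ2) ^ (-(2 * g - 2)) ≠ 0 :=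
    zpow_ne_zero _ (mul_ne_zero Δ1_ne Δ2_ne)
  set d : ℤ := 3 * (n : ℤ) - 6 * g + 6 with hd
  constructor
  · have hv : z2 ^ n * (Δ1 * Δ2) ^ (-(2 * g - 2)) ≠ 0 :=
      mul_ne_zero (pow_ne_zero _ z2_ne) hWne
    have hEq : Vplus g m n =
        Submodule.span ℂ (genSet d m (z2 ^ n * (Δ1 * Δ2) ^ (-(2 * g - 2)))) := by
      rw [Vplus]
      congr 1
      ext x
      simp only [genSet, Set.mem_setOf_eq]
      constructor
      · rintro ⟨k₁, k₂, h1, h2, rfl⟩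
        exact ⟨k₁, k₂, h1, h2, by rw [mul_assoc]⟩
      · rintro ⟨k₁, k₂, h1, h2, rfl⟩
        exact ⟨k₁, k₂, h1, h2, by rw [← mul_assoc]⟩
    rw [hEq, finrank_genSet d m _ hv]
  · cases m with
    | zero =>
      rw [if_neg (by omega)]
      have hb : Vminus g 0 n = ⊥ := by
        rw [Vminus]
        have hs : {f : K2 | ∃ k₁ k₂ : ℕ, k₁ + k₂ + 1 ≤ 0 ∧
            (k₁ : ℤ) - k₂ = 3 * n - 6 * g + 6 ∧
            f = (1 / 432 - 2 * z1) * z1 ^ k₁ * (1 / 432 - z1) ^ k₂ * z2 ^ n *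
              (Δ1 * Δ2) ^ (-(2 * g - 2))} = (∅ : Set K2) := by
          ext x
          simp only [Set.mem_setOf_eq, Set.mem_empty_iff_false, iff_false]
          rintro ⟨k₁, k₂, h1, -, -⟩
          omega
        rw [hs, Submodule.span_empty]
      rw [hb]
      exact finrank_bot ℂ K2
    | succ m' =>
      have hv : z2 ^ n * ((Δ1 * Δ2) ^ (-(2 * g - 2)) * (1 / 432 - 2 * z1)) ≠ 0 :=
        mul_ne_zero (pow_ne_zero _ z2_ne) (mul_ne_zero hWne e_ne)
      have hEq : Vminus g (m' + 1) n =
          Submodule.span ℂ (genSet d m'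
            (z2 ^ n * ((Δ1 * Δ2) ^ (-(2 * g - 2)) * (1 / 432 - 2 * z1)))) := by
        rw [Vminus]
        congr 1
        ext x
        simp only [genSet, Set.mem_setOf_eq]
        constructor
        · rintro ⟨k₁, k₂, h1, h2, rfl⟩
          exact ⟨k₁, k₂, by omega, h2, by ring⟩
        · rintro ⟨k₁, k₂, h1, h2, rfl⟩
          exact ⟨k₁, k₂, by omega, h2, by ring⟩
      rw [hEq, finrank_genSet d m' _ hv]
      by_cases hc : d.natAbs ≤ m'
      · rw [if_pos hc, if_pos (by omega)]
        omega
      · rw [if_neg hc, if_neg (by omega)]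

end
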